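/- Let a, b, c, d be real numbers with a·b·c·d < 0, let w ≥ 2 be even, let n be an integer with 0 < n < w, and set ñ = w − n. Then for every complex number X: ∫_{−i∞}^{i∞} (X−τ)^w / ((aτ+b)^{ñ+1}·(cτ+d)^{n+1}) dτ = ((−1)^n·2πi/(ad−bc)^{w+1})·C(w,n)·sgn(ab)·(aX+b)^n·(cX+d)^{ñ}. -/

import Mathlib

open MeasureTheory Complex Real Filter Finset


lemma aux9_ne (p q : ℝ) (hq : q ≠ 0) (y : ℝ) : (p:ℂ) * (Complex.I * y) + q ≠ 0 := by
  intro h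
  have := congrArg Complex.re h
  simp [Complex.add_re, Complex.mul_re] at this
  exact hq this

lemma aux9_normSq (p q y : ℝ) :
    ‖(p:ℂ) * (Complex.I * y) + q‖ = Real.sqrt (p^2*y^2 + q^2) := by
  rw [Complex.norm_def, Complex.normSq_apply]
  congr 1
  simp [Complex.add_re, Complex.add_im, Complex.mul_re, Complex.mul_im]
  ring

lemma aux9_lower (p q : ℝ) (y : ℝ) :
    Real.sqrt (min (p^2) (q^2)) * Real.sqrt (1+y^2) ≤ ‖(p:ℂ) * (Complex.I * y) + q‖ := by
  rw [aux9_normSq, ← Real.sqrt_mul (by positivity)]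
  apply Real.sqrt_le_sqrt
  have h1 : min (p^2) (q^2) ≤ q^2 := min_le_right _ _
  have h2 : min (p^2) (q^2) * y^2 ≤ p^2 * y^2 :=
    mul_le_mul_of_nonneg_right (min_le_left _ _) (by positivity)
  nlinarith

lemma aux9_int_of_bound (f : ℝ → ℂ) (hf : Continuous f) (C : ℝ)
    (h : ∀ y, ‖f y‖ ≤ C / (1+y^2)) : Integrable f :=
  (integrable_inv_one_add_sq.const_mul C).mono' hf.aestronglyMeasurable
    (Filter.Eventually.of_forall fun y => by simpa [div_eq_mul_inv] using h y)


lemma aux9_cont (p q : ℝ) : Continuous fun y : ℝ => (p:ℂ) * (Complex.I * y) + q := by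
  continuity

lemma aux9_sqrt1 (y : ℝ) : 1 ≤ Real.sqrt (1+y^2) := by
  have := Real.sqrt_le_sqrt (show (1:ℝ) ≤ 1+y^2 by nlinarith)
  rwa [Real.sqrt_one] at this

lemma aux9_int_pure (p q : ℝ) (hp : p ≠ 0) (hq : q ≠ 0) (j : ℕ) (hj : 2 ≤ j) :
    Integrable fun y : ℝ => (((p:ℂ)*(Complex.I*y)+q)^j)⁻¹ := by
  set m := Real.sqrt (min (p^2) (q^2)) with hm
  have hm0 : 0 < m := Real.sqrt_pos.2 (by positivity)
  apply aux9_int_of_bound _ (((aux9_cont p q).pow j).inv₀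
    (fun y => pow_ne_zero _ (aux9_ne p q hq y))) ((m^j)⁻¹)
  intro y
  have h1 : (0:ℝ) < 1+y^2 := by positivity
  have key : m^j * (1+y^2) ≤ ‖(p:ℂ) * (Complex.I * y) + q‖^j := by
    calc m^j * (1+y^2) = m^j * (Real.sqrt (1+y^2))^2 := by
          rw [Real.sq_sqrt h1.le]
      _ ≤ m^j * (Real.sqrt (1+y^2))^j :=
          mul_le_mul_of_nonneg_left (pow_le_pow_right₀ (aux9_sqrt1 y) hj) (by positivity)
      _ = (m * Real.sqrt (1+y^2))^j := by rw [mul_pow]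
      _ ≤ _ := pow_le_pow_left₀ (by positivity) (aux9_lower p q y) j
  show ‖(((p:ℂ)*(Complex.I*y)+q)^j)⁻¹‖ ≤ _
  rw [norm_inv, norm_pow]
  rw [div_eq_mul_inv, ← mul_inv]
  exact inv_anti₀ (by positivity) key

lemma aux9_int_prod (a b c d : ℝ) (ha : a ≠ 0) (hb : b ≠ 0) (hc : c ≠ 0) (hd : d ≠ 0) :
    Integrable fun y : ℝ => (((a:ℂ)*(Complex.I*y)+b) * ((c:ℂ)*(Complex.I*y)+d))⁻¹ := by
  set m1 := Real.sqrt (min (a^2) (b^2)) with hm1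
  set m2 := Real.sqrt (min (c^2) (d^2)) with hm2
  have hm10 : 0 < m1 := Real.sqrt_pos.2 (by positivity)
  have hm20 : 0 < m2 := Real.sqrt_pos.2 (by positivity)
  apply aux9_int_of_bound _ (((aux9_cont a b).mul (aux9_cont c d)).inv₀
    (fun y => mul_ne_zero (aux9_ne a b hb y) (aux9_ne c d hd y))) ((m1*m2)⁻¹)
  intro y
  have h1 : (0:ℝ) < 1+y^2 := by positivity
  have key : m1*m2 * (1+y^2) ≤ ‖((a:ℂ)*(Complex.I*y)+b) * ((c:ℂ)*(Complex.I*y)+d)‖ := by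
    rw [norm_mul]
    calc m1*m2*(1+y^2) = m1*m2*(Real.sqrt (1+y^2) * Real.sqrt (1+y^2)) := by
          rw [Real.mul_self_sqrt h1.le]
      _ = (m1 * Real.sqrt (1+y^2)) * (m2 * Real.sqrt (1+y^2)) := by ring
      _ ≤ _ := by
          apply mul_le_mul (aux9_lower a b y) (aux9_lower c d y) (by positivity)
            (norm_nonneg _)
  show ‖(((a:ℂ)*(Complex.I*y)+b) * ((c:ℂ)*(Complex.I*y)+d))⁻¹‖ ≤ _
  rw [norm_inv, div_eq_mul_inv, ← mul_inv]
  exact inv_anti₀ (by positivity) key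


lemma aux9_ne' (p q : ℝ) (hq : q ≠ 0) (t : ℂ) (ht : t.re = 0) : (p:ℂ) * t + q ≠ 0 := by
  intro h
  have := congrArg Complex.re h
  simp [Complex.add_re, Complex.mul_re, ht] at this
  exact hq this

lemma aux9_lower_abs (p q : ℝ) (y : ℝ) :
    Real.sqrt (min (p^2) (q^2)) * |y| ≤ ‖(p:ℂ) * (Complex.I * y) + q‖ := by
  refine le_trans ?_ (aux9_lower p q y)
  rw [show |y| = Real.sqrt (y^2) from (Real.sqrt_sq_eq_abs y).symm]
  exact mul_le_mul_of_nonneg_left (Real.sqrt_le_sqrt (by nlinarith)) (Real.sqrt_nonneg _)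

lemma aux9_norm_tendsto_top (p q : ℝ) (hp : p ≠ 0) (hq : q ≠ 0) :
    Tendsto (fun y : ℝ => ‖(p:ℂ) * (Complex.I * y) + q‖) atTop atTop := by
  have hm0 : 0 < Real.sqrt (min (p^2) (q^2)) := Real.sqrt_pos.2 (by positivity)
  apply tendsto_atTop_mono (fun y => aux9_lower_abs p q y)
  exact (tendsto_abs_atTop_atTop).const_mul_atTop hm0

lemma aux9_norm_tendsto_bot (p q : ℝ) (hp : p ≠ 0) (hq : q ≠ 0) :
    Tendsto (fun y : ℝ => ‖(p:ℂ) * (Complex.I * y) + q‖) atBot atTop := by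
  have hm0 : 0 < Real.sqrt (min (p^2) (q^2)) := Real.sqrt_pos.2 (by positivity)
  apply tendsto_atTop_mono (fun y => aux9_lower_abs p q y)
  exact (tendsto_abs_atBot_atTop).const_mul_atTop hm0

lemma aux9_zero_pure (p q : ℝ) (hp : p ≠ 0) (hq : q ≠ 0) (j : ℕ) (hj : 2 ≤ j) :
    ∫ y : ℝ, (((p:ℂ)*(Complex.I*y)+q)^j)⁻¹ = 0 := by
  obtain ⟨k, rfl⟩ : ∃ k, j = (k+1)+1 := ⟨j - 2, by omega⟩
  set k' := k+1 with hk'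
  set c : ℂ := -((k' : ℂ)) * p * Complex.I with hc
  have hc0 : c ≠ 0 := by
    refine mul_ne_zero (mul_ne_zero (neg_ne_zero.2 ?_) (Complex.ofReal_ne_zero.2 hp))
      Complex.I_ne_zero
    exact Nat.cast_ne_zero.2 (by omega)
  set F : ℝ → ℂ := fun y => ((((p:ℂ)*(Complex.I*y)+q))^k')⁻¹ / c with hF
  have hderiv : ∀ y : ℝ, HasDerivAt F ((((p:ℂ)*(Complex.I*y)+q)^(k'+1))⁻¹) y := by
    intro y
    set e : ℂ → ℂ := fun t => (((p:ℂ)*(Complex.I*t)+q)^k')⁻¹ / c with he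
    have hz : (p:ℂ)*(Complex.I*(y:ℂ))+q ≠ 0 := aux9_ne p q hq y
    have hlin : HasDerivAt (fun t : ℂ => (p:ℂ) * (Complex.I * t) + q) ((p:ℂ)*Complex.I) (y:ℂ) := by
      simpa using (((hasDerivAt_id (y:ℂ)).const_mul (Complex.I)).const_mul (p:ℂ)).add_const (q:ℂ)
    have h1 := ((hlin.pow k').inv (pow_ne_zero _ hz)).div_const c
    have h2 : HasDerivAt e ((((p:ℂ)*(Complex.I*(y:ℂ))+q)^(k'+1))⁻¹) (y:ℂ) := by
      refine h1.congr_deriv ?_; symm; simp only [Pi.pow_apply]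
      set z : ℂ := (p:ℂ)*(Complex.I*(y:ℂ))+q with hzdef
      rw [div_div, eq_div_iff (mul_ne_zero (pow_ne_zero _ (pow_ne_zero _ hz)) hc0)]
      rw [show ((z^k')^2 : ℂ) = z^(k'+1) * z^(k'-1) by
        rw [← pow_mul, ← pow_add]; congr 1; omega]
      rw [show z^(k'+1) * z^(k'-1) * c = z^(k'+1) * (z^(k'-1)*c) by ring,
        inv_mul_cancel_left₀ (pow_ne_zero _ hz), hc]
      ring
    exact h2.comp_ofReal
  have hint : Integrable fun y : ℝ => (((p:ℂ)*(Complex.I*y)+q)^(k'+1))⁻¹ :=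
    aux9_int_pure p q hp hq _ (by omega)
  have hcnorm : (0:ℝ) < ‖c‖ := norm_pos_iff.2 hc0
  have hlim : ∀ (l : Filter ℝ), Tendsto (fun y : ℝ => ‖(p:ℂ) * (Complex.I * y) + q‖) l atTop →
      Tendsto F l (nhds 0) := by
    intro l hl
    rw [tendsto_zero_iff_norm_tendsto_zero]
    have heq : (fun y : ℝ => ‖F y‖)
        = fun y : ℝ => (‖(p:ℂ)*(Complex.I*(y:ℂ))+q‖^k')⁻¹ * ‖c‖⁻¹ := by
      funext y
      rw [hF]
      rw [norm_div, norm_inv, norm_pow, div_eq_mul_inv]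
    rw [heq]
    have h3 : Tendsto (fun y : ℝ => ‖(p:ℂ)*(Complex.I*(y:ℂ))+q‖^k') l atTop :=
      (tendsto_pow_atTop (n := k') (by omega)).comp hl
    have h4 : Tendsto (fun y : ℝ => (‖(p:ℂ)*(Complex.I*(y:ℂ))+q‖^k')⁻¹) l (nhds 0) :=
      tendsto_inv_atTop_zero.comp h3
    have h5 := h4.mul_const (‖c‖⁻¹)
    rwa [zero_mul] at h5
  have htop : Tendsto F atTop (nhds 0) := hlim _ (aux9_norm_tendsto_top p q hp hq)
  have hbot : Tendsto F atBot (nhds 0) := hlim _ (aux9_norm_tendsto_bot p q hp hq)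
  rw [MeasureTheory.integral_of_hasDerivAt_of_tendsto hderiv hint hbot htop, sub_zero]


lemma aux9_split (z1 z2 r s : ℂ) (hz2 : z2 ≠ 0) (hspl : z1 = r*z2 + s) (m A : ℕ) :
    z1^(m+1)/z2^(A+1) = r*(z1^m/z2^A) + s*(z1^m/z2^(A+1)) := by
  rw [pow_succ z1, pow_succ z2,
    show z1^m*z1 = z1^m*(r*z2+s) by rw [← hspl]]
  field_simp

lemma aux9_mixed (a b c d : ℝ) (ha : a ≠ 0) (hb : b ≠ 0) (hc : c ≠ 0) (hd : d ≠ 0) :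
    ∀ m i : ℕ,
      Integrable (fun y : ℝ =>
        ((a:ℂ)*(Complex.I*y)+b)^m / ((c:ℂ)*(Complex.I*y)+d)^(m+2+i)) ∧
      ∫ y : ℝ, ((a:ℂ)*(Complex.I*y)+b)^m / ((c:ℂ)*(Complex.I*y)+d)^(m+2+i) = 0 := by
  intro m
  induction m with
  | zero =>
      intro i
      have h1 : (fun y : ℝ => ((a:ℂ)*(Complex.I*y)+b)^0 / ((c:ℂ)*(Complex.I*y)+d)^(0+2+i))
          = fun y : ℝ => (((c:ℂ)*(Complex.I*y)+d)^(2+i))⁻¹ := by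
        funext y; simp [pow_zero, one_div]
      rw [h1]
      exact ⟨aux9_int_pure c d hc hd _ (by omega), aux9_zero_pure c d hc hd _ (by omega)⟩
  | succ m ih =>
      intro i
      have key : ∀ y : ℝ,
          ((a:ℂ)*(Complex.I*y)+b)^(m+1) / ((c:ℂ)*(Complex.I*y)+d)^(m+1+2+i)
          = ((a:ℂ)/c) * (((a:ℂ)*(Complex.I*y)+b)^m / ((c:ℂ)*(Complex.I*y)+d)^(m+2+i))
            + (((b:ℂ)*c-a*d)/c) *
              (((a:ℂ)*(Complex.I*y)+b)^m / ((c:ℂ)*(Complex.I*y)+d)^(m+2+(i+1))) := by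
        intro y
        have hz1 : (a:ℂ)*(Complex.I*y)+b ≠ 0 := aux9_ne a b hb y
        have hz2 : (c:ℂ)*(Complex.I*y)+d ≠ 0 := aux9_ne c d hd y
        have hc' : (c:ℂ) ≠ 0 := Complex.ofReal_ne_zero.2 hc
        have hsplit : ((a:ℂ)*(Complex.I*y)+b)
            = ((a:ℂ)/c) * ((c:ℂ)*(Complex.I*y)+d) + ((b:ℂ)*c-a*d)/c := by
          rw [div_mul_eq_mul_div, ← add_div, eq_div_iff hc']
          ring
        rw [show m+1+2+i = (m+2+i)+1 by omega, show m+2+(i+1) = (m+2+i)+1 by omega]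
        exact aux9_split _ _ _ _ hz2 hsplit m (m+2+i)
      have hInt : Integrable (fun y : ℝ =>
          ((a:ℂ)*(Complex.I*y)+b)^(m+1) / ((c:ℂ)*(Complex.I*y)+d)^(m+1+2+i)) := by
        rw [show (fun y : ℝ => ((a:ℂ)*(Complex.I*y)+b)^(m+1) / ((c:ℂ)*(Complex.I*y)+d)^(m+1+2+i))
            = fun y : ℝ => ((a:ℂ)/c) * (((a:ℂ)*(Complex.I*y)+b)^m / ((c:ℂ)*(Complex.I*y)+d)^(m+2+i))
            + (((b:ℂ)*c-a*d)/c) *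
              (((a:ℂ)*(Complex.I*y)+b)^m / ((c:ℂ)*(Complex.I*y)+d)^(m+2+(i+1))) from funext key]
        exact ((ih i).1.const_mul _).add ((ih (i+1)).1.const_mul _)
      refine ⟨hInt, ?_⟩
      rw [show (fun y : ℝ => ((a:ℂ)*(Complex.I*y)+b)^(m+1) / ((c:ℂ)*(Complex.I*y)+d)^(m+1+2+i))
            = fun y : ℝ => ((a:ℂ)/c) * (((a:ℂ)*(Complex.I*y)+b)^m / ((c:ℂ)*(Complex.I*y)+d)^(m+2+i))
            + (((b:ℂ)*c-a*d)/c) *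
              (((a:ℂ)*(Complex.I*y)+b)^m / ((c:ℂ)*(Complex.I*y)+d)^(m+2+(i+1))) from funext key]
      rw [integral_add ((ih i).1.const_mul _) ((ih (i+1)).1.const_mul _),
        integral_const_mul, integral_const_mul, (ih i).2, (ih (i+1)).2]
      simp


-- mini algebraic lemma: real/imag decomposition of p/(p i y + q)
lemma aux9_mini (p q y : ℝ) (hq : q ≠ 0) :
    ((p*q/(q^2+p^2*y^2) : ℝ) : ℂ) - Complex.I * ((p^2*y/(q^2+p^2*y^2) : ℝ) : ℂ)
      = (p:ℂ)/((p:ℂ)*(Complex.I*y)+q) := by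
  have hz := aux9_ne p q hq y
  have hden : (q^2+p^2*y^2 : ℝ) ≠ 0 := by positivity
  have hden' : ((q^2+p^2*y^2 : ℝ) : ℂ) ≠ 0 := Complex.ofReal_ne_zero.2 hden
  have hden2 : ((q:ℂ)^2+(p:ℂ)^2*(y:ℂ)^2) ≠ 0 := by
    have h0 : ((q^2+p^2*y^2 : ℝ):ℂ) ≠ 0 := Complex.ofReal_ne_zero.2 hden
    push_cast at h0
    exact h0
  push_cast
  rw [← mul_div_assoc, div_sub_div_same, div_eq_div_iff hden2 hz]
  ring_nf
  rw [Complex.I_sq]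
  ring

lemma aux9_div_sub (a b c d y : ℝ) (hb : b ≠ 0) (hd : d ≠ 0) :
    (a:ℂ)/((a:ℂ)*(Complex.I*y)+b) - (c:ℂ)/((c:ℂ)*(Complex.I*y)+d)
      = ((a:ℂ)*d - b*c) / (((a:ℂ)*(Complex.I*y)+b) * ((c:ℂ)*(Complex.I*y)+d)) := by
  rw [div_sub_div _ _ (aux9_ne a b hb y) (aux9_ne c d hd y)]
  congr 1
  ring

set_option maxHeartbeats 800000 in
lemma aux9_middle_pos (a b c d : ℝ) (ha : a ≠ 0) (hb : b ≠ 0) (hc : c ≠ 0) (hd : d ≠ 0)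
    (hab : 0 < a*b) (hcd : c*d < 0) :
    ∫ y : ℝ, ((a:ℂ)*d - b*c) / (((a:ℂ)*(Complex.I*y)+b) * ((c:ℂ)*(Complex.I*y)+d))
      = 2*(Real.pi:ℂ) := by
  set A : ℝ → ℝ := fun y => Real.arctan (a*y/b) - Real.arctan (c*y/d) with hA
  set B : ℝ → ℝ := fun y => Real.log (a^2*y^2+b^2) - Real.log (c^2*y^2+d^2) with hB
  set G : ℝ → ℂ := fun y => ((A y : ℝ) : ℂ) - (Complex.I/2) * ((B y : ℝ) : ℂ) with hG
  have hposa : ∀ y : ℝ, (0:ℝ) < a^2*y^2+b^2 := fun y => by positivity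
  have hposc : ∀ y : ℝ, (0:ℝ) < c^2*y^2+d^2 := fun y => by positivity
  -- derivative of G
  have hderiv : ∀ y : ℝ, HasDerivAt G
      (((a:ℂ)*d - b*c) / (((a:ℂ)*(Complex.I*y)+b) * ((c:ℂ)*(Complex.I*y)+d))) y := by
    intro y
    have harct : ∀ p q : ℝ, q ≠ 0 → HasDerivAt (fun y : ℝ => Real.arctan (p*y/q))
        (p*q/(q^2+p^2*y^2)) y := by
      intro p q hq
      have h1 : HasDerivAt (fun y : ℝ => p*y/q) (p/q) y := by
        simpa using ((hasDerivAt_id y).const_mul p).div_const q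
      have h2 := (Real.hasDerivAt_arctan (p*y/q)).comp y h1
      refine h2.congr_deriv ?_; symm
      field_simp
    have hlog : ∀ p q : ℝ, (0 < p^2*y^2+q^2) → HasDerivAt (fun y : ℝ => Real.log (p^2*y^2+q^2))
        (2*p^2*y/(p^2*y^2+q^2)) y := by
      intro p q hpos
      have h1 : HasDerivAt (fun y : ℝ => p^2*y^2+q^2) (2*p^2*y) y := by
        have h := ((hasDerivAt_pow 2 y).const_mul (p^2)).add_const (q^2)
        refine h.congr_deriv ?_; symm
        norm_num
        ring
      have h2 := (Real.hasDerivAt_log hpos.ne').comp y h1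
      refine h2.congr_deriv ?_; symm
      field_simp
    have hAy : HasDerivAt A (a*b/(b^2+a^2*y^2) - c*d/(d^2+c^2*y^2)) y :=
      (harct a b hb).sub (harct c d hd)
    have hBy : HasDerivAt B (2*a^2*y/(a^2*y^2+b^2) - 2*c^2*y/(c^2*y^2+d^2)) y :=
      (hlog a b (hposa y)).sub (hlog c d (hposc y))
    have hGy := (hAy.ofReal_comp).sub ((hBy.ofReal_comp).const_mul (Complex.I/2))
    refine hGy.congr_deriv ?_; symm
    rw [← aux9_div_sub a b c d y hb hd]
    rw [← aux9_mini a b y hb, ← aux9_mini c d y hd]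
    push_cast
    ring
  -- integrability
  have hint : Integrable (fun y : ℝ =>
      ((a:ℂ)*d - b*c) / (((a:ℂ)*(Complex.I*y)+b) * ((c:ℂ)*(Complex.I*y)+d))) := by
    have h := (aux9_int_prod a b c d ha hb hc hd).const_mul ((a:ℂ)*d - b*c)
    simpa [div_eq_mul_inv] using h
  -- limits of B
  have hBlim : ∀ (l : Filter ℝ), l.NeBot → (∀ᶠ y in l, y ≠ 0) →
      Tendsto (fun y : ℝ => (y^2)⁻¹) l (nhds 0) →
      Tendsto B l (nhds (Real.log (a^2) - Real.log (c^2))) := by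
    intro l _ hne hinv
    have hev : B =ᶠ[l] fun y => Real.log (a^2+b^2/y^2) - Real.log (c^2+d^2/y^2) := by
      filter_upwards [hne] with y hy
      have hy2 : (y:ℝ)^2 ≠ 0 := pow_ne_zero 2 hy
      have e1 : a^2*y^2+b^2 = (a^2+b^2/y^2)*y^2 := by field_simp
      have e2 : c^2*y^2+d^2 = (c^2+d^2/y^2)*y^2 := by field_simp
      have p1 : (0:ℝ) < a^2+b^2/y^2 := by positivity
      have p2 : (0:ℝ) < c^2+d^2/y^2 := by positivity
      rw [hB]
      simp only [e1, e2, Real.log_mul p1.ne' hy2, Real.log_mul p2.ne' hy2]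
      ring
    have h1 : Tendsto (fun y : ℝ => a^2+b^2/y^2) l (nhds (a^2)) := by
      have := hinv.const_mul (b^2)
      rw [mul_zero] at this
      have := (tendsto_const_nhds (x := a^2) (f := l)).add this
      rw [add_zero] at this
      simpa [div_eq_mul_inv] using this
    have h2 : Tendsto (fun y : ℝ => c^2+d^2/y^2) l (nhds (c^2)) := by
      have := hinv.const_mul (d^2)
      rw [mul_zero] at this
      have := (tendsto_const_nhds (x := c^2) (f := l)).add this
      rw [add_zero] at this
      simpa [div_eq_mul_inv] using this
    have hla := ((Real.continuousAt_log (by positivity : (a:ℝ)^2 ≠ 0)).tendsto).comp h1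
    have hlc := ((Real.continuousAt_log (by positivity : (c:ℝ)^2 ≠ 0)).tendsto).comp h2
    exact Tendsto.congr' hev.symm (hla.sub hlc)
  have hsqbot : Tendsto (fun y : ℝ => y^2) atBot atTop := by
    have h2 : Tendsto (fun y : ℝ => (-y)^2) atBot atTop :=
      (tendsto_pow_atTop (n := 2) two_ne_zero).comp tendsto_neg_atBot_atTop
    exact h2.congr fun y => neg_sq y
  have hy2top : Tendsto (fun y : ℝ => (y^2)⁻¹) atTop (nhds 0) :=
    (tendsto_pow_atTop (n := 2) two_ne_zero : Tendsto (fun y : ℝ => y^2) atTop atTop).inv_tendsto_atTop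
  have hy2bot : Tendsto (fun y : ℝ => (y^2)⁻¹) atBot (nhds 0) :=
    hsqbot.inv_tendsto_atTop
  have hBtop := hBlim atTop inferInstance (eventually_ne_atTop 0) hy2top
  have hBbot := hBlim atBot inferInstance (eventually_ne_atBot 0) hy2bot
  -- limits of A
  have hadb : 0 < a/b := by
    rw [show a/b = a*b/b^2 by rw [div_eq_div_iff hb (pow_ne_zero 2 hb)]; ring]
    positivity
  have hcdn : c/d < 0 := by
    rw [show c/d = c*d/d^2 by rw [div_eq_div_iff hd (pow_ne_zero 2 hd)]; ring]
    exact div_neg_of_neg_of_pos hcd (by positivity)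
  have harg1 : ∀ p q : ℝ, (fun y : ℝ => p*y/q) = fun y : ℝ => (p/q)*y := by
    intro p q; funext y; ring
  have ht1 : Tendsto (fun y : ℝ => a*y/b) atTop atTop := by
    rw [harg1]; simpa using tendsto_id.const_mul_atTop hadb
  have ht2 : Tendsto (fun y : ℝ => a*y/b) atBot atBot := by
    rw [harg1]; simpa using tendsto_id.const_mul_atBot hadb
  have ht3 : Tendsto (fun y : ℝ => c*y/d) atTop atBot := by
    rw [harg1]; simpa using tendsto_id.const_mul_atTop_of_neg hcdn
  have ht4 : Tendsto (fun y : ℝ => c*y/d) atBot atTop := by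
    rw [harg1]; simpa using tendsto_id.const_mul_atBot_of_neg hcdn
  have harctop := tendsto_nhds_of_tendsto_nhdsWithin Real.tendsto_arctan_atTop
  have harcbot := tendsto_nhds_of_tendsto_nhdsWithin Real.tendsto_arctan_atBot
  have hAtop : Tendsto A atTop (nhds (Real.pi/2 - -(Real.pi/2))) :=
    (harctop.comp ht1).sub (harcbot.comp ht3)
  have hAbot : Tendsto A atBot (nhds (-(Real.pi/2) - Real.pi/2)) :=
    (harcbot.comp ht2).sub (harctop.comp ht4)
  -- limits of G
  have hGlim : ∀ (l : Filter ℝ) (α β : ℝ), Tendsto A l (nhds α) → Tendsto B l (nhds β) →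
      Tendsto G l (nhds ((α:ℂ) - (Complex.I/2) * (β:ℂ))) := by
    intro l α β hA' hB'
    exact ((Complex.continuous_ofReal.tendsto _).comp hA').sub
      (((Complex.continuous_ofReal.tendsto _).comp hB').const_mul (Complex.I/2))
  have hGtop := hGlim atTop _ _ hAtop hBtop
  have hGbot := hGlim atBot _ _ hAbot hBbot
  rw [MeasureTheory.integral_of_hasDerivAt_of_tendsto hderiv hint hGbot hGtop]
  push_cast
  ring


lemma aux9_D_ne (a b c d : ℝ) (habcd : a*b*c*d < 0) : a*d - b*c ≠ 0 := by
  intro h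
  nlinarith [sq_nonneg (a*d), sq_nonneg (b*c)]

lemma aux9_middle (a b c d : ℝ) (ha : a ≠ 0) (hb : b ≠ 0) (hc : c ≠ 0) (hd : d ≠ 0)
    (habcd : a*b*c*d < 0) :
    ∫ y : ℝ, (((a:ℂ)*(Complex.I*y)+b) * ((c:ℂ)*(Complex.I*y)+d))⁻¹
      = 2*(Real.pi:ℂ) * ((Real.sign (a*b) : ℝ) : ℂ) / ((a:ℂ)*d - b*c) := by
  have hDr : a*d - b*c ≠ 0 := aux9_D_ne a b c d habcd
  have hD : ((a:ℂ)*d - b*c) ≠ 0 := by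
    intro h
    apply hDr
    exact_mod_cast (by push_cast at h ⊢; exact h : ((a*d - b*c : ℝ) : ℂ) = 0)
  have hab0 : a*b ≠ 0 := mul_ne_zero ha hb
  rcases hab0.lt_or_gt with hab | hab
  · -- a*b < 0, so c*d > 0
    have hcd : 0 < c*d := by nlinarith
    have h := aux9_middle_pos c d a b hc hd ha hb hcd hab
    have heq : (fun y : ℝ => ((c:ℂ)*b - d*a) / (((c:ℂ)*(Complex.I*y)+d) * ((a:ℂ)*(Complex.I*y)+b)))
        = fun y : ℝ => ((c:ℂ)*b - d*a) * ((((a:ℂ)*(Complex.I*y)+b) * ((c:ℂ)*(Complex.I*y)+d))⁻¹) := by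
      funext y; rw [mul_comm (((c:ℂ)*(Complex.I*y)+d)) (((a:ℂ)*(Complex.I*y)+b)), div_eq_mul_inv]
    rw [heq, integral_const_mul] at h
    have hD' : ((c:ℂ)*b - d*a) ≠ 0 := by
      intro h0
      apply hD
      linear_combination -h0
    rw [Real.sign_of_neg hab, Complex.ofReal_neg, Complex.ofReal_one]
    rw [eq_div_iff hD]
    linear_combination -h
  · -- a*b > 0, c*d < 0
    have hcd : c*d < 0 := by nlinarith
    have h := aux9_middle_pos a b c d ha hb hc hd hab hcd
    have heq : (fun y : ℝ => ((a:ℂ)*d - b*c) / (((a:ℂ)*(Complex.I*y)+b) * ((c:ℂ)*(Complex.I*y)+d)))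
        = fun y : ℝ => ((a:ℂ)*d - b*c) * ((((a:ℂ)*(Complex.I*y)+b) * ((c:ℂ)*(Complex.I*y)+d))⁻¹) := by
      funext y; rw [div_eq_mul_inv]
    rw [heq, integral_const_mul] at h
    rw [Real.sign_of_pos hab, Complex.ofReal_one]
    rw [eq_div_iff hD]
    linear_combination h



lemma aux9_alg1 (E m P Q u v ch : ℂ) (hu : u ≠ 0) (hv : v ≠ 0) (k α γ : ℕ) :
    E * (m * (P*v)^k * (Q*u)^(α+γ) * ch) / (u^γ * v^(k+(α+2+0)))
      = E * (m * P^k * Q^(α+γ) * ch) * (u^α / v^(α+2+0)) := by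
  rw [← mul_div_assoc, div_eq_div_iff (mul_ne_zero (pow_ne_zero _ hu) (pow_ne_zero _ hv))
    (pow_ne_zero _ hv), mul_pow P v, mul_pow Q u]
  ring

lemma aux9_alg2 (E m P Q u v ch : ℂ) (hu : u ≠ 0) (hv : v ≠ 0) (β γ n' : ℕ) :
    E * (m * (P*v)^(β+n') * (Q*u)^γ * ch) / (u^(γ+(β+2+0)) * v^n')
      = E * (m * P^(β+n') * Q^γ * ch) * (v^β / u^(β+2+0)) := by
  rw [← mul_div_assoc, div_eq_div_iff (mul_ne_zero (pow_ne_zero _ hu) (pow_ne_zero _ hv))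
    (pow_ne_zero _ hu), mul_pow P v, mul_pow Q u]
  ring

lemma aux9_alg3 (E m P Q u v ch : ℂ) (hu : u ≠ 0) (hv : v ≠ 0) (s t : ℕ) :
    E * (m * (P*v)^t * (Q*u)^s * ch) / (u^(s+1) * v^(t+1))
      = E * (m * P^t * Q^s * ch) * ((u*v)⁻¹) := by
  rw [← div_eq_mul_inv, div_eq_div_iff
    (mul_ne_zero (pow_ne_zero _ hu) (pow_ne_zero _ hv)) (mul_ne_zero hu hv),
    mul_pow P v, mul_pow Q u]
  ring

set_option maxHeartbeats 1000000 in
theorem integral_imaginary_axis_rational_fn (a b c d : ℝ) (habcd : a * b * c * d < 0)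
    (w : ℕ) (hw : 2 ≤ w) (hwe : Even w) (n : ℕ) (hn0 : 0 < n) (hnw : n < w) (X : ℂ) :
    (Complex.I * ∫ y : ℝ, (X - Complex.I * y) ^ w /
        (((a : ℂ) * (Complex.I * y) + b) ^ (w - n + 1) *
          ((c : ℂ) * (Complex.I * y) + d) ^ (n + 1))) =
      (-1) ^ n * 2 * Real.pi * Complex.I / ((a : ℂ) * d - b * c) ^ (w + 1) *
        (w.choose n) * Real.sign (a * b) *
        ((a : ℂ) * X + b) ^ n * ((c : ℂ) * X + d) ^ (w - n) := by
  have ha : a ≠ 0 := by rintro rfl; simp at habcd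
  have hb : b ≠ 0 := by rintro rfl; simp at habcd
  have hc : c ≠ 0 := by rintro rfl; simp at habcd
  have hd : d ≠ 0 := by rintro rfl; simp at habcd
  have hDr : a*d - b*c ≠ 0 := aux9_D_ne a b c d habcd
  have hD : ((a:ℂ)*d - b*c) ≠ 0 := by
    intro h
    apply hDr
    exact_mod_cast (by push_cast at h ⊢; exact h : ((a*d - b*c : ℝ) : ℂ) = 0)
  set D : ℂ := (a:ℂ)*d - b*c with hDdef
  set F : ℕ → ℝ → ℂ := fun k y =>
    (D⁻¹^w * ((-1)^(k+w) * (((a:ℂ)*X+b)*((c:ℂ)*(Complex.I*y)+d))^k *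
      ((((c:ℂ)*X+d)*((a:ℂ)*(Complex.I*y)+b))^(w-k)) * (w.choose k))) /
      (((a:ℂ)*(Complex.I*y)+b)^(w-n+1) * ((c:ℂ)*(Complex.I*y)+d)^(n+1)) with hF
  have key : ∀ y : ℝ, (X - Complex.I * y) ^ w /
        (((a : ℂ) * (Complex.I * y) + b) ^ (w - n + 1) *
          ((c : ℂ) * (Complex.I * y) + d) ^ (n + 1))
      = ∑ k ∈ range (w+1), F k y := by
    intro y
    have hXz : X - Complex.I * y
        = D⁻¹ * (((a:ℂ)*X+b)*((c:ℂ)*(Complex.I*y)+d) - ((c:ℂ)*X+d)*((a:ℂ)*(Complex.I*y)+b)) := by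
      rw [inv_mul_eq_div, eq_div_iff hD, hDdef]
      ring
    rw [hXz, mul_pow, sub_pow, Finset.mul_sum, Finset.sum_div]
  -- integrability and values for each term
  have hlt : ∀ k, k < n →
      Integrable (F k) ∧ ∫ y : ℝ, F k y = 0 := by
    intro k hk
    set c1 : ℂ := D⁻¹^w * ((-1)^(k+w) * ((a:ℂ)*X+b)^k * ((c:ℂ)*X+d)^((n-1-k)+(w-n+1)) * (w.choose k)) with hc1
    have hks : ∀ y : ℝ, F k y
        = c1 * (((a:ℂ)*(Complex.I*y)+b)^(n-1-k) / ((c:ℂ)*(Complex.I*y)+d)^((n-1-k)+2+0)) := by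
      intro y
      have hz1 := aux9_ne a b hb y
      have hz2 := aux9_ne c d hd y
      simp only [hF]
      rw [show w-k = (n-1-k)+(w-n+1) by omega, show n+1 = k+((n-1-k)+2+0) by omega, hc1]
      exact aux9_alg1 (D⁻¹^w) ((-1)^(k+w)) ((a:ℂ)*X+b) ((c:ℂ)*X+d) _ _ (w.choose k)
        hz1 hz2 k (n-1-k) (w-n+1)
    rw [show F k = fun y : ℝ => c1 * (((a:ℂ)*(Complex.I*(y:ℝ))+b)^(n-1-k) / ((c:ℂ)*(Complex.I*(y:ℝ))+d)^((n-1-k)+2+0)) from funext hks]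
    constructor
    · exact ((aux9_mixed a b c d ha hb hc hd (n-1-k) 0).1).const_mul c1
    · rw [integral_const_mul, (aux9_mixed a b c d ha hb hc hd (n-1-k) 0).2, mul_zero]
  have hgt : ∀ k, n < k → k ≤ w →
      Integrable (F k) ∧ ∫ y : ℝ, F k y = 0 := by
    intro k hk hkw
    set c1 : ℂ := D⁻¹^w * ((-1)^(k+w) * ((a:ℂ)*X+b)^((k-n-1)+(n+1)) * ((c:ℂ)*X+d)^(w-k) * (w.choose k)) with hc1
    have hks : ∀ y : ℝ, F k y
        = c1 * (((c:ℂ)*(Complex.I*y)+d)^(k-n-1) / ((a:ℂ)*(Complex.I*y)+b)^((k-n-1)+2+0)) := by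
      intro y
      have hz1 := aux9_ne a b hb y
      have hz2 := aux9_ne c d hd y
      simp only [hF]
      rw [show (((a:ℂ)*X+b)*((c:ℂ)*(Complex.I*(y:ℝ))+d))^k
          = (((a:ℂ)*X+b)*((c:ℂ)*(Complex.I*(y:ℝ))+d))^((k-n-1)+(n+1)) from by
            rw [show (k-n-1)+(n+1) = k by omega],
        show w-n+1 = (w-k)+((k-n-1)+2+0) by omega, hc1]
      exact aux9_alg2 (D⁻¹^w) ((-1)^(k+w)) ((a:ℂ)*X+b) ((c:ℂ)*X+d) _ _ (w.choose k)
        hz1 hz2 (k-n-1) (w-k) (n+1)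
    rw [show F k = fun y : ℝ => c1 * (((c:ℂ)*(Complex.I*(y:ℝ))+d)^(k-n-1) / ((a:ℂ)*(Complex.I*(y:ℝ))+b)^((k-n-1)+2+0)) from funext hks]
    constructor
    · exact ((aux9_mixed c d a b hc hd ha hb (k-n-1) 0).1).const_mul c1
    · rw [integral_const_mul, (aux9_mixed c d a b hc hd ha hb (k-n-1) 0).2, mul_zero]
  set c1 : ℂ := D⁻¹^w * ((-1)^(n+w) * ((a:ℂ)*X+b)^n * ((c:ℂ)*X+d)^(w-n) * (w.choose n)) with hc1
  have hmidks : ∀ y : ℝ, F n y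
      = c1 * ((((a:ℂ)*(Complex.I*y)+b) * ((c:ℂ)*(Complex.I*y)+d))⁻¹) := by
    intro y
    have hz1 := aux9_ne a b hb y
    have hz2 := aux9_ne c d hd y
    simp only [hF]
    rw [hc1]
    exact aux9_alg3 (D⁻¹^w) ((-1)^(n+w)) ((a:ℂ)*X+b) ((c:ℂ)*X+d) _ _ (w.choose n)
      hz1 hz2 (w-n) n
  have hmid : Integrable (F n) ∧
      ∫ y : ℝ, F n y = c1 * (2*(Real.pi:ℂ) * ((Real.sign (a*b) : ℝ) : ℂ) / D) := by
    rw [show F n = fun y : ℝ => c1 * ((((a:ℂ)*(Complex.I*(y:ℝ))+b) * ((c:ℂ)*(Complex.I*(y:ℝ))+d))⁻¹) from funext hmidks]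
    constructor
    · exact (aux9_int_prod a b c d ha hb hc hd).const_mul c1
    · rw [integral_const_mul, aux9_middle a b c d ha hb hc hd habcd]
  -- assemble
  have hintsum : ∫ y : ℝ, (X - Complex.I * y) ^ w /
        (((a : ℂ) * (Complex.I * y) + b) ^ (w - n + 1) *
          ((c : ℂ) * (Complex.I * y) + d) ^ (n + 1))
      = ∑ k ∈ range (w+1), ∫ y : ℝ, F k y := by
    rw [show (fun y : ℝ => (X - Complex.I * y) ^ w /
        (((a : ℂ) * (Complex.I * y) + b) ^ (w - n + 1) *
          ((c : ℂ) * (Complex.I * y) + d) ^ (n + 1))) = fun y => ∑ k ∈ range (w+1), F k y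
      from funext key]
    apply integral_finset_sum
    intro k hk
    rcases lt_trichotomy k n with h | h | h
    · exact (hlt k h).1
    · subst h; exact hmid.1
    · exact (hgt k h (by simp at hk; omega)).1
  rw [hintsum, Finset.sum_eq_single_of_mem n (by simp; omega)
    (fun k hk hkn => by
      rcases lt_trichotomy k n with h | h | h
      · exact (hlt k h).2
      · exact absurd h hkn
      · exact (hgt k h (by simp at hk; omega)).2), hmid.2]
  -- final arithmetic
  rw [hc1]
  have hne1 : ((-1):ℂ)^(n+w) = (-1)^n := by
    rw [pow_add, hwe.neg_one_pow, mul_one]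
  rw [hne1]
  rw [show D^(w+1) = D^w * D from pow_succ D w]
  field_simp
  have hDw : (1/D)^w * D^w = 1 := by rw [← mul_pow, one_div, inv_mul_cancel₀ hD, one_pow]
  linear_combination (((a:ℂ) * X + b) ^ n * (X * c + d) ^ (w - n) * (w.choose n)) * hDw
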